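/- Let (Ω, ℱ, P) be a probability space, let m = s²·n for positive integers s and n, and let x, y : Ω → ℝᵐ be square-integrable random vectors with E[x | σ(y)] = y almost surely and Var(xⱼ | σ(y)) ≤ 1 almost surely for every j. Let f : ℝᵐ → ℝᵐ be measurable with f∘x square-integrable. Let 𝒥 be a nonempty finite family of subsets of {1,…,m}, each of cardinality n = m/s², such that every index j ∈ {1,…,m} belongs to exactly |𝒥|/s² members of 𝒥. For each J ∈ 𝒥, let g^J : Ω → ℝᴶ be a square-integrable random vector with Cov(g^J_j, x_j | σ(y)) = 0 almost surely for every j ∈ J. Then E[⟨f(x) − y, x − y⟩] ≤ √(m·s²) · (1/|𝒥|) · Σ_{J∈𝒥} ( E[ Σ_{j∈J} (f(x)_j − g^J_j)² ] )^{1/2}. -/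

import Mathlib

open MeasureTheory Finset

/-- Conditional expectation `E[f | 𝒢]` under measure `μ` (ambient σ-algebra `mΩ`). -/
noncomputable def condExpect {Ω : Type*} {mΩ : MeasurableSpace Ω} (𝒢 : MeasurableSpace Ω)
    (μ : @Measure Ω mΩ) {E : Type*} [NormedAddCommGroup E] [NormedSpace ℝ E] [CompleteSpace E]
    (f : Ω → E) : Ω → E :=
  MeasureTheory.condExp (α := Ω) (E := E) (m₀ := mΩ) 𝒢 μ f

/-- Conditional covariance of two real random variables given a sub-σ-algebra `𝒢`:
`Cov(U, V | 𝒢) = E[U·V | 𝒢] − E[U | 𝒢]·E[V | 𝒢]`. -/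
noncomputable def condCov {Ω : Type*} {mΩ : MeasurableSpace Ω} (𝒢 : MeasurableSpace Ω)
    (μ : @Measure Ω mΩ) (U V : Ω → ℝ) : Ω → ℝ :=
  fun ω => condExpect 𝒢 μ (fun ω' => U ω' * V ω') ω
    - condExpect 𝒢 μ U ω * condExpect 𝒢 μ V ω

/-- Conditional variance: `Var(U | 𝒢) = Cov(U, U | 𝒢)`. -/
noncomputable def condVar {Ω : Type*} {mΩ : MeasurableSpace Ω} (𝒢 : MeasurableSpace Ω)
    (μ : @Measure Ω mΩ) (U : Ω → ℝ) : Ω → ℝ :=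
  condCov 𝒢 μ U U

section Aux
variable {Ω : Type*} {mΩ : MeasurableSpace Ω} {P : Measure Ω}

set_option linter.unusedSectionVars false

lemma myInt_mul {u v : Ω → ℝ} (hu : MemLp u 2 P) (hv : MemLp v 2 P) :
    Integrable (fun ω => u ω * v ω) P := by
  have h : MemLp (u • v) 1 P := hv.smul (𝕜 := ℝ) hu
    (hpqr := ⟨by simp [ENNReal.inv_two_add_inv_two]⟩)
  exact memLp_one_iff_integrable.mp h

lemma myCS {u v : Ω → ℝ} (hu : MemLp u 2 P) (hv : MemLp v 2 P) :
    ∫ ω, u ω * v ω ∂P ≤ Real.sqrt (∫ ω, u ω ^ 2 ∂P) * Real.sqrt (∫ ω, v ω ^ 2 ∂P) := by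
  have key : ∀ (a b : Ω → ℝ) (ha : MemLp a 2 P) (hb : MemLp b 2 P),
      inner (𝕜 := ℝ) (ha.toLp a) (hb.toLp b) = ∫ ω, a ω * b ω ∂P := by
    intro a b ha hb
    rw [L2.inner_def]
    refine integral_congr_ae ?_
    filter_upwards [ha.coeFn_toLp, hb.coeFn_toLp] with ω h1 h2
    simp [h1, h2, RCLike.inner_apply, mul_comm]
  have hnorm : ∀ (a : Ω → ℝ) (ha : MemLp a 2 P),
      Real.sqrt (∫ ω, a ω ^ 2 ∂P) = ‖ha.toLp a‖ := by
    intro a ha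
    have h2 := key a a ha ha
    rw [real_inner_self_eq_norm_sq] at h2
    have h3 : ∫ ω, a ω ^ 2 ∂P = ∫ ω, a ω * a ω ∂P := by simp_rw [pow_two]
    rw [h3, ← h2, Real.sqrt_sq (norm_nonneg _)]
  have hcs := real_inner_le_norm (hu.toLp u) (hv.toLp v)
  rw [key u v hu hv] at hcs
  rw [hnorm u hu, hnorm v hv]
  exact hcs

lemma myProj {m : ℕ} {x : Ω → EuclideanSpace ℝ (Fin m)} (hx : MemLp x 2 P) (j : Fin m) :
    MemLp (fun ω => x ω j) 2 P := by
  have := (EuclideanSpace.proj (𝕜 := ℝ) j).comp_memLp' hx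
  refine this.ae_eq (Filter.Eventually.of_forall fun ω => ?_)
  simp [Function.comp]

end Aux

lemma key_j {Ω : Type*} {𝒢 mΩ : MeasurableSpace Ω} (hle : 𝒢 ≤ mΩ)
    (P : @Measure Ω mΩ) [IsProbabilityMeasure P]
    (X Y F G : Ω → ℝ)
    (hX : MemLp X 2 P) (hY : MemLp Y 2 P) (hF : MemLp F 2 P) (hG : MemLp G 2 P)
    (hYm : StronglyMeasurable[𝒢] Y)
    (hcondX : P[X|𝒢] =ᵐ[P] Y)
    (hvar : ∀ᵐ ω ∂P, condVar 𝒢 P X ω ≤ 1)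
    (hGcov : ∀ᵐ ω ∂P, condCov 𝒢 P G X ω = 0) :
    ∫ ω, (F ω - Y ω) * (X ω - Y ω) ∂P ≤ Real.sqrt (∫ ω, (F ω - G ω) ^ 2 ∂P) := by
  unfold condVar condCov condExpect at hvar
  unfold condCov condExpect at hGcov
  haveI : SigmaFinite (P.trim hle) := inferInstance
  have hXi : Integrable X P := hX.integrable one_le_two
  have hYi : Integrable Y P := hY.integrable one_le_two
  -- orthogonality
  have horth : ∀ (h : Ω → ℝ), MemLp h 2 P →
      ((P[fun ω => h ω * X ω|𝒢]) =ᵐ[P] fun ω => (P[h|𝒢]) ω * Y ω) →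
      ∫ ω, h ω * (X ω - Y ω) ∂P = 0 := by
    intro h hh hhyp
    have hi : Integrable h P := hh.integrable one_le_two
    have hhX : Integrable (fun ω => h ω * X ω) P := myInt_mul hh hX
    have hhY : Integrable (fun ω => h ω * Y ω) P := myInt_mul hh hY
    have e1 : ∫ ω, h ω * X ω ∂P = ∫ ω, (P[h|𝒢]) ω * Y ω ∂P := by
      rw [← integral_condExp hle (f := fun ω => h ω * X ω)]
      exact integral_congr_ae hhyp
    have e2 : ∫ ω, h ω * Y ω ∂P = ∫ ω, (P[h|𝒢]) ω * Y ω ∂P := by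
      have hpull := condExp_mul_of_stronglyMeasurable_left (μ := P) hYm
        (by exact (myInt_mul hY hh : Integrable (fun ω => Y ω * h ω) P)) hi
      calc ∫ ω, h ω * Y ω ∂P = ∫ ω, (Y * h) ω ∂P := by
            refine integral_congr_ae (Filter.Eventually.of_forall fun ω => ?_)
            simp [mul_comm]
        _ = ∫ ω, (P[Y * h|𝒢]) ω ∂P := (integral_condExp hle).symm
        _ = ∫ ω, (P[h|𝒢]) ω * Y ω ∂P := by
            refine integral_congr_ae (hpull.mono fun ω hω => ?_)
            rw [hω]; simp [mul_comm]
    have := integral_sub hhX hhY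
    simp_rw [mul_sub]
    rw [this, e1, e2, sub_self]
  -- Y orthogonality
  have hYorth : ∫ ω, Y ω * (X ω - Y ω) ∂P = 0 := by
    refine horth Y hY ?_
    have hpull := condExp_mul_of_stronglyMeasurable_left (μ := P) hYm
      (by exact (myInt_mul hY hX : Integrable (fun ω => Y ω * X ω) P)) hXi
    have hYc : P[Y|𝒢] = Y := condExp_of_stronglyMeasurable hle hYm hYi
    filter_upwards [hpull, hcondX] with ω h1 h2
    show (P[fun ω => Y ω * X ω|𝒢]) ω = (P[Y|𝒢]) ω * Y ω
    rw [hYc]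
    calc (P[fun ω => Y ω * X ω|𝒢]) ω = (Y * P[X|𝒢]) ω := h1
      _ = Y ω * Y ω := by simp [h2]
  -- G orthogonality
  have hGorth : ∫ ω, G ω * (X ω - Y ω) ∂P = 0 := by
    refine horth G hG ?_
    filter_upwards [hGcov, hcondX] with ω h1 h2
    have : (P[fun ω' => G ω' * X ω'|𝒢]) ω = (P[G|𝒢]) ω * (P[X|𝒢]) ω := by
      have := sub_eq_zero.mp h1
      exact this
    rw [this, h2]
  -- variance bound
  have hvar' : ∫ ω, (X ω - Y ω) ^ 2 ∂P ≤ 1 := by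
    have hXX : Integrable (fun ω => X ω * X ω) P := myInt_mul hX hX
    have hXY : Integrable (fun ω => X ω * Y ω) P := myInt_mul hX hY
    have hYY : Integrable (fun ω => Y ω * Y ω) P := myInt_mul hY hY
    have hXmY : ∫ ω, X ω * Y ω ∂P = ∫ ω, Y ω * Y ω ∂P := by
      have := hYorth
      rw [show (fun ω => Y ω * (X ω - Y ω)) = fun ω => Y ω * X ω - Y ω * Y ω by
        funext ω; ring] at this
      rw [integral_sub (myInt_mul hY hX) hYY] at this
      have h2 : ∫ ω, Y ω * X ω ∂P = ∫ ω, Y ω * Y ω ∂P := by linarith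
      calc ∫ ω, X ω * Y ω ∂P = ∫ ω, Y ω * X ω ∂P := by
            refine integral_congr_ae (Filter.Eventually.of_forall fun ω => ?_); ring
        _ = _ := h2
    have hexp : ∫ ω, (X ω - Y ω) ^ 2 ∂P = ∫ ω, X ω * X ω ∂P - ∫ ω, Y ω * Y ω ∂P := by
      have : (fun ω => (X ω - Y ω) ^ 2)
          = fun ω => X ω * X ω - (X ω * Y ω + (X ω * Y ω - Y ω * Y ω)) := by
        funext ω; ring
      have h1 : Integrable (fun ω => X ω * Y ω + (X ω * Y ω - Y ω * Y ω)) P := by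
        exact hXY.add (hXY.sub hYY)
      have h2 : Integrable (fun ω => X ω * Y ω - Y ω * Y ω) P := by
        exact hXY.sub hYY
      rw [this, integral_sub hXX h1, integral_add hXY h2, integral_sub hXY hYY, hXmY]
      ring
    -- variance of X
    have hG0int : Integrable (fun ω => (P[fun ω' => X ω' * X ω'|𝒢]) ω - Y ω * Y ω) P :=
      integrable_condExp.sub hYY
    have hG0le : ∀ᵐ ω ∂P, (P[fun ω' => X ω' * X ω'|𝒢]) ω - Y ω * Y ω ≤ 1 := by
      filter_upwards [hvar, hcondX] with ω h1 h2
      rw [← h2]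
      exact h1
    have hint1 : ∫ ω, ((P[fun ω' => X ω' * X ω'|𝒢]) ω - Y ω * Y ω) ∂P ≤ 1 := by
      have := integral_mono_ae hG0int (integrable_const (1 : ℝ)) hG0le
      simpa using this
    rw [integral_sub integrable_condExp hYY, integral_condExp hle] at hint1
    linarith [hexp]
  -- final bound
  have hsplit : ∫ ω, (F ω - Y ω) * (X ω - Y ω) ∂P
      = ∫ ω, (F ω - G ω) * (X ω - Y ω) ∂P := by
    have hFG : Integrable (fun ω => (F ω - G ω) * (X ω - Y ω)) P :=
      myInt_mul (hF.sub hG) (hX.sub hY)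
    have hGY : Integrable (fun ω => (G ω - Y ω) * (X ω - Y ω)) P :=
      myInt_mul (hG.sub hY) (hX.sub hY)
    have : (fun ω => (F ω - Y ω) * (X ω - Y ω))
        = fun ω => (F ω - G ω) * (X ω - Y ω) + (G ω - Y ω) * (X ω - Y ω) := by
      funext ω; ring
    rw [this, integral_add hFG hGY]
    have hz : ∫ ω, (G ω - Y ω) * (X ω - Y ω) ∂P = 0 := by
      have : (fun ω => (G ω - Y ω) * (X ω - Y ω))
          = fun ω => G ω * (X ω - Y ω) - Y ω * (X ω - Y ω) := by funext ω; ring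
      have h1 : Integrable (fun ω => G ω * (X ω - Y ω)) P := myInt_mul hG (hX.sub hY)
      have h2 : Integrable (fun ω => Y ω * (X ω - Y ω)) P := myInt_mul hY (hX.sub hY)
      rw [this, integral_sub h1 h2, hGorth, hYorth, sub_zero]
    rw [hz, add_zero]
  rw [hsplit]
  calc ∫ ω, (F ω - G ω) * (X ω - Y ω) ∂P
      ≤ Real.sqrt (∫ ω, (F ω - G ω) ^ 2 ∂P) * Real.sqrt (∫ ω, (X ω - Y ω) ^ 2 ∂P) :=
        myCS (hF.sub hG) (hX.sub hY)
    _ ≤ Real.sqrt (∫ ω, (F ω - G ω) ^ 2 ∂P) * 1 := by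
        refine mul_le_mul_of_nonneg_left ?_ (Real.sqrt_nonneg _)
        calc Real.sqrt (∫ ω, (X ω - Y ω) ^ 2 ∂P) ≤ Real.sqrt 1 :=
              Real.sqrt_le_sqrt hvar'
          _ = 1 := Real.sqrt_one
    _ = Real.sqrt (∫ ω, (F ω - G ω) ^ 2 ∂P) := mul_one _

lemma cond_comp {Ω : Type*} {𝒢 mΩ : MeasurableSpace Ω} (hle : 𝒢 ≤ mΩ)
    (P : @Measure Ω mΩ) [IsProbabilityMeasure P] {m : ℕ}
    {x y : Ω → EuclideanSpace ℝ (Fin m)}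
    (hx : MemLp x 2 P) (hy : MemLp y 2 P)
    (hym : ∀ j : Fin m, StronglyMeasurable[𝒢] (fun ω => y ω j))
    (hcond : P[x|𝒢] =ᵐ[P] y) (j : Fin m) :
    P[(fun ω => x ω j)|𝒢] =ᵐ[P] fun ω => y ω j := by
  haveI : SigmaFinite (P.trim hle) := inferInstance
  have hxint : Integrable x P := hx.integrable one_le_two
  refine (ae_eq_condExp_of_forall_setIntegral_eq hle ((myProj hx j).integrable one_le_two)
    (fun s _ _ => ((myProj hy j).integrable one_le_two).integrableOn)
    (fun s hs hμs => ?_) ((hym j).aestronglyMeasurable)).symm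
  have hvec : ∫ ω in s, y ω ∂P = ∫ ω in s, x ω ∂P := by
    have h0 : ∫ ω in s, y ω ∂P = ∫ ω in s, (P[x|𝒢]) ω ∂P :=
      integral_congr_ae (ae_restrict_of_ae hcond.symm)
    rw [h0, setIntegral_condExp hle hxint hs]
  have hxi : IntegrableOn x s P := hxint.integrableOn
  have hyi : IntegrableOn y s P := (hy.integrable one_le_two).integrableOn
  have h1 := (EuclideanSpace.proj (𝕜 := ℝ) j).integral_comp_comm hyi
  have h2 := (EuclideanSpace.proj (𝕜 := ℝ) j).integral_comp_comm hxi
  simp only [PiLp.proj_apply] at h1 h2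
  calc ∫ ω in s, y ω j ∂P = (∫ ω in s, y ω ∂P) j := h1
    _ = (∫ ω in s, x ω ∂P) j := by rw [hvec]
    _ = ∫ ω in s, x ω j ∂P := h2.symm


open RealInnerProductSpace in
/-- **Key intermediate bound for Proposition 1.** The cross term between the denoising residual
`f(x) − y` and the noise `x − y` is controlled by the averaged downsampled invariance term:
`E[⟨f(x) − y, x − y⟩] ≤ √(m·s²) · (1/|𝒥|) · Σ_{J∈𝒥} (E[Σ_{j∈J} (f(x)ⱼ − gᴶⱼ)²])^{1/2}`. -/
theorem cross_term_le_downsampled_invariance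
    {Ω : Type*} [mΩ : MeasurableSpace Ω] (P : Measure Ω) [IsProbabilityMeasure P]
    (m s n : ℕ) (hs : 0 < s) (hn : 0 < n) (hm : m = s ^ 2 * n)
    (x y : Ω → EuclideanSpace ℝ (Fin m))
    (hxm : Measurable x) (hym : Measurable y)
    (hx : MemLp x 2 P) (hy : MemLp y 2 P)
    (hcond : condExpect (MeasurableSpace.comap y inferInstance) P x =ᵐ[P] y)
    (hvar : ∀ j : Fin m, ∀ᵐ ω ∂P,
      condVar (MeasurableSpace.comap y inferInstance) P (fun ω' => x ω' j) ω ≤ 1)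
    (f : EuclideanSpace ℝ (Fin m) → EuclideanSpace ℝ (Fin m)) (hf : Measurable f)
    (hfx : MemLp (fun ω => f (x ω)) 2 P)
    (𝒥 : Finset (Finset (Fin m))) (h𝒥 : 𝒥.Nonempty)
    (hJcard : ∀ J ∈ 𝒥, J.card = n)
    (hJcount : ∀ j : Fin m, s ^ 2 * (𝒥.filter (fun J => j ∈ J)).card = 𝒥.card)
    (g : Finset (Fin m) → Fin m → Ω → ℝ)
    (hg : ∀ J ∈ 𝒥, ∀ j ∈ J, MemLp (g J j) 2 P)
    (hgcov : ∀ J ∈ 𝒥, ∀ j ∈ J, ∀ᵐ ω ∂P,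
      condCov (MeasurableSpace.comap y inferInstance) P (g J j) (fun ω' => x ω' j) ω = 0) :
    ∫ ω, ⟪f (x ω) - y ω, x ω - y ω⟫ ∂P ≤
      Real.sqrt ((m : ℝ) * s ^ 2) * ((1 / (𝒥.card : ℝ)) *
        ∑ J ∈ 𝒥, Real.sqrt (∫ ω, ∑ j ∈ J, (f (x ω) j - g J j ω) ^ 2 ∂P)) := by
  have hle : MeasurableSpace.comap y inferInstance ≤ mΩ := measurable_iff_comap_le.mp hym
  have hy𝒢 : Measurable[MeasurableSpace.comap y inferInstance] y :=
    measurable_iff_comap_le.mpr le_rfl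
  have hym' : ∀ j : Fin m, StronglyMeasurable[MeasurableSpace.comap y inferInstance]
      (fun ω => y ω j) := fun j =>
    (((EuclideanSpace.proj (𝕜 := ℝ) j).continuous.measurable).comp hy𝒢).stronglyMeasurable
  have hcondj := fun j => cond_comp hle P hx hy hym' hcond j
  set t : Fin m → ℝ := fun j => ∫ ω, (f (x ω) j - y ω j) * (x ω j - y ω j) ∂P with ht
  set b : Finset (Fin m) → Fin m → ℝ :=
    fun J j => Real.sqrt (∫ ω, (f (x ω) j - g J j ω) ^ 2 ∂P) with hbdef
  have hbnn : ∀ J j, 0 ≤ b J j := fun J j => Real.sqrt_nonneg _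
  have hkey : ∀ J ∈ 𝒥, ∀ j ∈ J, t j ≤ b J j := by
    intro J hJ j hj
    exact key_j hle P _ _ _ _ (myProj hx j) (myProj hy j) (myProj hfx j) (hg J hJ j hj)
      (hym' j) (hcondj j) (hvar j) (hgcov J hJ j hj)
  have hLHS : ∫ ω, ⟪f (x ω) - y ω, x ω - y ω⟫ ∂P = ∑ j : Fin m, t j := by
    have hpt : ∀ ω, ⟪f (x ω) - y ω, x ω - y ω⟫
        = ∑ j : Fin m, (f (x ω) j - y ω j) * (x ω j - y ω j) := by
      intro ω
      rw [PiLp.inner_apply]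
      refine Finset.sum_congr rfl fun j _ => ?_
      simp [RCLike.inner_apply, mul_comm]
    calc ∫ ω, ⟪f (x ω) - y ω, x ω - y ω⟫ ∂P
        = ∫ ω, ∑ j : Fin m, (f (x ω) j - y ω j) * (x ω j - y ω j) ∂P :=
          integral_congr_ae (Filter.Eventually.of_forall hpt)
      _ = ∑ j : Fin m, t j := by
          refine integral_finset_sum _ fun j _ => ?_
          exact myInt_mul ((myProj hfx j).sub (myProj hy j)) ((myProj hx j).sub (myProj hy j))
  have hcardpos : 0 < (𝒥.card : ℝ) := by exact_mod_cast Finset.card_pos.mpr h𝒥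
  have hsum1 : ∑ j : Fin m, t j ≤ ((s : ℝ) ^ 2 / 𝒥.card) * ∑ J ∈ 𝒥, ∑ j ∈ J, b J j := by
    have hstep : ∀ j : Fin m,
        t j ≤ ((s : ℝ) ^ 2 / 𝒥.card) * ∑ J ∈ 𝒥.filter (fun J => j ∈ J), b J j := by
      intro j
      have hcount : (s : ℝ) ^ 2 * ((𝒥.filter (fun J => j ∈ J)).card : ℝ) = (𝒥.card : ℝ) := by
        exact_mod_cast congrArg (Nat.cast : ℕ → ℝ) (hJcount j)
      have hone : ((s : ℝ) ^ 2 / 𝒥.card) * ((𝒥.filter (fun J => j ∈ J)).card : ℝ) = 1 := by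
        rw [div_mul_eq_mul_div, hcount, div_self (ne_of_gt hcardpos)]
      have hfilter_sum : ∑ J ∈ 𝒥.filter (fun J => j ∈ J), t j
          = ((𝒥.filter (fun J => j ∈ J)).card : ℝ) * t j := by
        rw [Finset.sum_const, nsmul_eq_mul]
      calc t j = ((s : ℝ) ^ 2 / 𝒥.card) * (((𝒥.filter (fun J => j ∈ J)).card : ℝ) * t j) := by
            rw [← mul_assoc, hone, one_mul]
        _ = ((s : ℝ) ^ 2 / 𝒥.card) * ∑ J ∈ 𝒥.filter (fun J => j ∈ J), t j := by
            rw [hfilter_sum]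
        _ ≤ ((s : ℝ) ^ 2 / 𝒥.card) * ∑ J ∈ 𝒥.filter (fun J => j ∈ J), b J j := by
            refine mul_le_mul_of_nonneg_left ?_ (by positivity)
            refine Finset.sum_le_sum fun J hJ => ?_
            rw [Finset.mem_filter] at hJ
            exact hkey J hJ.1 j hJ.2
    calc ∑ j : Fin m, t j
        ≤ ∑ j : Fin m, ((s : ℝ) ^ 2 / 𝒥.card) * ∑ J ∈ 𝒥.filter (fun J => j ∈ J), b J j :=
          Finset.sum_le_sum fun j _ => hstep j
      _ = ((s : ℝ) ^ 2 / 𝒥.card) * ∑ j : Fin m, ∑ J ∈ 𝒥.filter (fun J => j ∈ J), b J j := by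
          rw [Finset.mul_sum]
      _ = ((s : ℝ) ^ 2 / 𝒥.card) * ∑ J ∈ 𝒥, ∑ j ∈ J, b J j := by
          congr 1
          calc ∑ j : Fin m, ∑ J ∈ 𝒥.filter (fun J => j ∈ J), b J j
              = ∑ j : Fin m, ∑ J ∈ 𝒥, if j ∈ J then b J j else 0 := by
                refine Finset.sum_congr rfl fun j _ => ?_
                rw [Finset.sum_filter]
            _ = ∑ J ∈ 𝒥, ∑ j : Fin m, if j ∈ J then b J j else 0 := Finset.sum_comm
            _ = ∑ J ∈ 𝒥, ∑ j ∈ J, b J j := by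
                refine Finset.sum_congr rfl fun J _ => ?_
                rw [Finset.sum_ite_mem, Finset.univ_inter]
  have hJbound : ∀ J ∈ 𝒥, ∑ j ∈ J, b J j
      ≤ Real.sqrt n * Real.sqrt (∫ ω, ∑ j ∈ J, (f (x ω) j - g J j ω) ^ 2 ∂P) := by
    intro J hJ
    have hint : ∀ j ∈ J, Integrable (fun ω => (f (x ω) j - g J j ω) ^ 2) P := fun j hj => by
      exact ((myProj hfx j).sub (hg J hJ j hj)).integrable_sq
    have hswap : ∫ ω, ∑ j ∈ J, (f (x ω) j - g J j ω) ^ 2 ∂P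
        = ∑ j ∈ J, ∫ ω, (f (x ω) j - g J j ω) ^ 2 ∂P := integral_finset_sum J hint
    have hsq : ∀ j ∈ J, (b J j) ^ 2 = ∫ ω, (f (x ω) j - g J j ω) ^ 2 ∂P := fun j hj =>
      Real.sq_sqrt (integral_nonneg fun ω => sq_nonneg _)
    have h1 : (∑ j ∈ J, b J j) ^ 2 ≤ (J.card : ℝ) * ∑ j ∈ J, (b J j) ^ 2 :=
      sq_sum_le_card_mul_sum_sq
    have h2 : ∑ j ∈ J, (b J j) ^ 2 = ∫ ω, ∑ j ∈ J, (f (x ω) j - g J j ω) ^ 2 ∂P := by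
      rw [hswap]; exact Finset.sum_congr rfl hsq
    calc ∑ j ∈ J, b J j = Real.sqrt ((∑ j ∈ J, b J j) ^ 2) :=
          (Real.sqrt_sq (Finset.sum_nonneg fun j _ => hbnn J j)).symm
      _ ≤ Real.sqrt ((J.card : ℝ) * ∑ j ∈ J, (b J j) ^ 2) := Real.sqrt_le_sqrt h1
      _ = Real.sqrt (J.card : ℝ) * Real.sqrt (∑ j ∈ J, (b J j) ^ 2) :=
          Real.sqrt_mul (Nat.cast_nonneg _) _
      _ = Real.sqrt n * Real.sqrt (∫ ω, ∑ j ∈ J, (f (x ω) j - g J j ω) ^ 2 ∂P) := by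
          rw [hJcard J hJ, h2]
  have hconst : Real.sqrt ((m : ℝ) * s ^ 2) = (s : ℝ) ^ 2 * Real.sqrt n := by
    have h0 : ((m : ℝ) * s ^ 2) = ((s : ℝ) ^ 2) ^ 2 * n := by
      rw [hm]; push_cast; ring
    rw [h0, Real.sqrt_mul (by positivity), Real.sqrt_sq (by positivity)]
  rw [hLHS]
  calc ∑ j : Fin m, t j ≤ ((s : ℝ) ^ 2 / 𝒥.card) * ∑ J ∈ 𝒥, ∑ j ∈ J, b J j := hsum1
    _ ≤ ((s : ℝ) ^ 2 / 𝒥.card) * ∑ J ∈ 𝒥,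
          Real.sqrt n * Real.sqrt (∫ ω, ∑ j ∈ J, (f (x ω) j - g J j ω) ^ 2 ∂P) := by
        exact mul_le_mul_of_nonneg_left (Finset.sum_le_sum hJbound) (by positivity)
    _ = Real.sqrt ((m : ℝ) * s ^ 2) * ((1 / (𝒥.card : ℝ)) *
          ∑ J ∈ 𝒥, Real.sqrt (∫ ω, ∑ j ∈ J, (f (x ω) j - g J j ω) ^ 2 ∂P)) := by
        rw [hconst, ← Finset.mul_sum]
        ring
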